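/- Let Γ ≤ SL(2,ℤ) be a subgroup containing [[1, 2N],[0,1]] for some N ≥ 1 and, for some prime p, an element congruent to [[0,1],[−1,0]] modulo p. If a point (a,b) ∈ ℝ²/ℤ² has finite Γᵀ-orbit (under the transposed action), then (a,b) ∈ ℚ²/ℤ², i.e. the point is torsion. -/

import Mathlib

open Matrix

/-- The upper triangular unipotent matrix `[[1, M],[0, 1]]` in `SL(2,ℤ)`. -/
def unip (M : ℤ) : Matrix.SpecialLinearGroup (Fin 2) ℤ :=
  ⟨!![1, M; 0, 1], by simp [Matrix.det_fin_two_of]⟩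

lemma unip_pow (M : ℤ) (k : ℕ) : (unip M) ^ k = unip (M * k) := by
  induction k with
  | zero => ext i j; fin_cases i <;> fin_cases j <;> simp [pow_zero] <;> rfl
  | succ n ih =>
    rw [pow_succ, ih]
    ext i j
    have h : ((unip (M * n) * unip M : Matrix.SpecialLinearGroup (Fin 2) ℤ) :
        Matrix (Fin 2) (Fin 2) ℤ) = !![1, M*n; 0, 1] * !![1, M; 0, 1] := by
      rw [Matrix.SpecialLinearGroup.coe_mul]; simp [unip]
    fin_cases i <;> fin_cases j <;>
      · rw [h]; simp [unip, Matrix.mul_apply, Fin.sum_univ_two]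
        try ring

lemma rat_of_fin (y d : ℝ) (S : Set (AddCircle (1:ℝ))) (hS : S.Finite)
    (h : ∀ k : ℕ, ((y + k * d : ℝ) : AddCircle (1:ℝ)) ∈ S) : ∃ q : ℚ, d = q := by
  obtain ⟨k1, -, k2, -, hne, heq⟩ :=
    Set.infinite_univ.exists_ne_map_eq_of_mapsTo
      (f := fun k : ℕ => ((y + k * d : ℝ) : AddCircle (1:ℝ))) (fun k _ => h k) hS
  have h0 : (((k1 : ℝ) * d - (k2 : ℝ) * d : ℝ) : AddCircle (1:ℝ)) = 0 := by
    have h2 : ((y + k1 * d : ℝ) : AddCircle (1:ℝ)) - ((y + k2 * d : ℝ) : AddCircle (1:ℝ)) = 0 := by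
      rw [heq]; simp
    rw [← QuotientAddGroup.mk_sub] at h2
    convert h2 using 2
    ring
  rw [AddCircle.coe_eq_zero_iff] at h0
  obtain ⟨n, hn⟩ := h0
  have hk : ((k1 : ℝ) - k2) ≠ 0 := by
    simpa [sub_eq_zero] using hne
  refine ⟨(n : ℚ) / ((k1 : ℚ) - k2), ?_⟩
  have key : ((k1 : ℝ) - k2) * d = n := by
    simp only [zsmul_eq_mul, mul_one] at hn
    rw [sub_mul]; exact hn.symm
  have hk2 : ((k1 : ℚ) - k2) ≠ 0 := by
    intro h; apply hk
    have := congrArg (fun q : ℚ => (q : ℝ)) h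
    push_cast at this; exact this
  field_simp
  push_cast
  rw [eq_div_iff hk]
  linarith [key]

lemma unip_coe (m : ℤ) : ((unip m : Matrix.SpecialLinearGroup (Fin 2) ℤ) :
    Matrix (Fin 2) (Fin 2) ℤ) = !![1, m; 0, 1] := rfl

lemma unip_e01 (m : ℤ) : ((unip m : Matrix.SpecialLinearGroup (Fin 2) ℤ) :
    Matrix (Fin 2) (Fin 2) ℤ) 0 1 = m := by rw [unip_coe]; simp

lemma unip_e11 (m : ℤ) : ((unip m : Matrix.SpecialLinearGroup (Fin 2) ℤ) :
    Matrix (Fin 2) (Fin 2) ℤ) 1 1 = 1 := by rw [unip_coe]; simp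

lemma mul_unip_e01 (g : Matrix.SpecialLinearGroup (Fin 2) ℤ) (m : ℤ) :
    ((g * unip m : Matrix.SpecialLinearGroup (Fin 2) ℤ) : Matrix (Fin 2) (Fin 2) ℤ) 0 1 =
    (g : Matrix (Fin 2) (Fin 2) ℤ) 0 0 * m + (g : Matrix (Fin 2) (Fin 2) ℤ) 0 1 := by
  rw [Matrix.SpecialLinearGroup.coe_mul]
  simp [unip, Matrix.mul_apply, Fin.sum_univ_two]

lemma mul_unip_e11 (g : Matrix.SpecialLinearGroup (Fin 2) ℤ) (m : ℤ) :
    ((g * unip m : Matrix.SpecialLinearGroup (Fin 2) ℤ) : Matrix (Fin 2) (Fin 2) ℤ) 1 1 =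
    (g : Matrix (Fin 2) (Fin 2) ℤ) 1 0 * m + (g : Matrix (Fin 2) (Fin 2) ℤ) 1 1 := by
  rw [Matrix.SpecialLinearGroup.coe_mul]
  simp [unip, Matrix.mul_apply, Fin.sum_univ_two]

theorem stmt_18 (Γ : Subgroup (Matrix.SpecialLinearGroup (Fin 2) ℤ))
    (N : ℕ) (hN : 1 ≤ N) (hunip : unip (2 * N) ∈ Γ)
    (p : ℕ) (hp : p.Prime)
    (hmod : ∃ γ ∈ Γ,
      ((γ : Matrix (Fin 2) (Fin 2) ℤ) 0 0) ≡ 0 [ZMOD p] ∧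
      ((γ : Matrix (Fin 2) (Fin 2) ℤ) 0 1) ≡ 1 [ZMOD p] ∧
      ((γ : Matrix (Fin 2) (Fin 2) ℤ) 1 0) ≡ -1 [ZMOD p] ∧
      ((γ : Matrix (Fin 2) (Fin 2) ℤ) 1 1) ≡ 0 [ZMOD p])
    (a b : ℝ)
    (hfin : (Set.image
      (fun γ : Matrix.SpecialLinearGroup (Fin 2) ℤ =>
        (((((γ : Matrix (Fin 2) (Fin 2) ℤ) 0 0 : ℝ) * a +
            ((γ : Matrix (Fin 2) (Fin 2) ℤ) 1 0 : ℝ) * b : ℝ) :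
              AddCircle (1 : ℝ)),
         ((((γ : Matrix (Fin 2) (Fin 2) ℤ) 0 1 : ℝ) * a +
            ((γ : Matrix (Fin 2) (Fin 2) ℤ) 1 1 : ℝ) * b : ℝ) :
              AddCircle (1 : ℝ))))
      (Γ : Set (Matrix.SpecialLinearGroup (Fin 2) ℤ))).Finite) :
    (∃ q : ℚ, a = (q : ℝ)) ∧ (∃ q : ℚ, b = (q : ℝ)) := by
  set f : Matrix.SpecialLinearGroup (Fin 2) ℤ → AddCircle (1:ℝ) × AddCircle (1:ℝ) :=
    fun γ =>
      (((((γ : Matrix (Fin 2) (Fin 2) ℤ) 0 0 : ℝ) * a +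
          ((γ : Matrix (Fin 2) (Fin 2) ℤ) 1 0 : ℝ) * b : ℝ) : AddCircle (1 : ℝ)),
       ((((γ : Matrix (Fin 2) (Fin 2) ℤ) 0 1 : ℝ) * a +
          ((γ : Matrix (Fin 2) (Fin 2) ℤ) 1 1 : ℝ) * b : ℝ) : AddCircle (1 : ℝ))) with hf
  have hSfin : (Prod.snd '' (f '' (Γ : Set _))).Finite := hfin.image _
  have hNR : (0:ℝ) < 2 * N := by positivity
  have hsnd : ∀ γ : Matrix.SpecialLinearGroup (Fin 2) ℤ,
      (f γ).2 = ((((γ : Matrix (Fin 2) (Fin 2) ℤ) 0 1 : ℤ) : ℝ) * a +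
        (((γ : Matrix (Fin 2) (Fin 2) ℤ) 1 1 : ℤ) : ℝ) * b : ℝ) := by
    intro γ
    rw [hf]
  -- Step 1: a is rational
  have ha : ∃ q : ℚ, a = q := by
    have h1 : ∀ k : ℕ, ((b + k * (2 * N * a) : ℝ) : AddCircle (1:ℝ)) ∈
        Prod.snd '' (f '' (Γ : Set _)) := by
      intro k
      refine ⟨f ((unip (2*N))^k), ⟨(unip (2*N))^k, pow_mem hunip k, rfl⟩, ?_⟩
      rw [unip_pow, hsnd, unip_e01, unip_e11]
      congr 1
      push_cast
      ring
    obtain ⟨q, hq⟩ := rat_of_fin b (2 * N * a) _ hSfin h1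
    refine ⟨q / (2 * N), ?_⟩
    push_cast
    rw [eq_div_iff (by positivity)]
    linarith [hq]
  obtain ⟨qa, hqa⟩ := ha
  -- Step 2: b is rational
  obtain ⟨γ0, hγ0, hc00, hc01, hc10, hc11⟩ := hmod
  have hc10ne : ((γ0 : Matrix (Fin 2) (Fin 2) ℤ) 1 0) ≠ 0 := by
    intro h0
    rw [h0] at hc10
    have hd : (p:ℤ) ∣ 1 := by simpa using hc10.dvd
    have hd2 : p ∣ 1 := by exact_mod_cast hd
    have := Nat.le_of_dvd one_pos hd2
    have := hp.one_lt
    omega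
  set c00 := ((γ0 : Matrix (Fin 2) (Fin 2) ℤ) 0 0) with hc0
  set c01 := ((γ0 : Matrix (Fin 2) (Fin 2) ℤ) 0 1) with hc1
  set c10 := ((γ0 : Matrix (Fin 2) (Fin 2) ℤ) 1 0) with hc2
  set c11 := ((γ0 : Matrix (Fin 2) (Fin 2) ℤ) 1 1) with hc3
  have h2 : ∀ k : ℕ, (((c01 * a + c11 * b) + k * (2 * N * (c00 * a + c10 * b)) : ℝ) :
      AddCircle (1:ℝ)) ∈ Prod.snd '' (f '' (Γ : Set _)) := by
    intro k
    have hmem : γ0 * (unip (2*N))^k ∈ Γ := mul_mem hγ0 (pow_mem hunip k)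
    refine ⟨f (γ0 * (unip (2*N))^k), ⟨γ0 * (unip (2*N))^k, hmem, rfl⟩, ?_⟩
    rw [unip_pow, hsnd, mul_unip_e01, mul_unip_e11, ← hc0, ← hc1, ← hc2, ← hc3]
    congr 1
    push_cast
    ring
  obtain ⟨q, hq⟩ := rat_of_fin _ _ _ hSfin h2
  have hqs : c00 * a + c10 * b = ((q / (2 * N) : ℚ) : ℝ) := by
    push_cast
    rw [eq_div_iff (by positivity)]
    linarith [hq]
  refine ⟨⟨qa, hqa⟩, ⟨(q / (2*N) - c00 * qa) / c10, ?_⟩⟩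
  have hc10r : ((c10 : ℝ)) ≠ 0 := by exact_mod_cast hc10ne
  push_cast
  rw [eq_div_iff hc10r]
  rw [hqa] at hqs
  push_cast at hqs ⊢
  linarith [hqs]
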